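/- Fix a symmetric positive definite m×m real matrix R with unit diagonal. Then for every u ∈ ℝ^m and every index a ∈ {1,…,m}, the conditional potential function ψ(u) := log det(L(u) + I) has a partial derivative with respect to u_a at u, and ∂ψ/∂u_a (u) = K(u)_{aa}, the (a,a)-entry of the marginal kernel K(u) := L(u)(L(u) + I)^{-1}. (This is the duality formula η_{α₁} = ∂ψ/∂u^{α₁} relating the L-ensemble parameterization to the marginal kernel.) -/

import Mathlib

/-- The kernel `L(u) = D(u) R D(u)` with `D(u) = diag(e^{u₁/2}, …, e^{u_m/2})`. -/
noncomputable def Lmat {m : ℕ} (R : Matrix (Fin m) (Fin m) ℝ) (u : Fin m → ℝ) :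
    Matrix (Fin m) (Fin m) ℝ :=
  Matrix.diagonal (fun i => Real.exp (u i / 2)) * R *
    Matrix.diagonal (fun i => Real.exp (u i / 2))

/-- The conditional potential function `ψ(u) = log det(L(u) + I)`. -/
noncomputable def psi {m : ℕ} (R : Matrix (Fin m) (Fin m) ℝ) (u : Fin m → ℝ) : ℝ :=
  Real.log (Lmat R u + 1).det

/-- The marginal kernel `K(u) = L(u)(L(u) + I)⁻¹`. -/
noncomputable def Kmat {m : ℕ} (R : Matrix (Fin m) (Fin m) ℝ) (u : Fin m → ℝ) :
    Matrix (Fin m) (Fin m) ℝ :=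
  Lmat R u * (Lmat R u + 1)⁻¹

theorem partial_deriv_psi_eq_marginal_kernel_diag (m : ℕ)
    (R : Matrix (Fin m) (Fin m) ℝ) (hsymm : R.IsSymm) (hR : R.PosDef)
    (hdiag : ∀ i, R i i = 1) (u : Fin m → ℝ) (a : Fin m) :
    HasDerivAt (fun t : ℝ => psi R (Function.update u a t)) (Kmat R u a a) (u a) := by
  classical
  set D : Matrix (Fin m) (Fin m) ℝ := Matrix.diagonal (fun i => Real.exp (u i / 2)) with hDdef
  set Dinv : Matrix (Fin m) (Fin m) ℝ :=
    Matrix.diagonal (fun i => Real.exp (-(u i / 2))) with hDinvdef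
  have hDDinv : D * Dinv = 1 := by
    rw [hDdef, hDinvdef, Matrix.diagonal_mul_diagonal]
    rw [show (fun i => Real.exp (u i / 2) * Real.exp (-(u i / 2))) = fun _ => (1 : ℝ) by
      funext i; rw [← Real.exp_add]; simp]
    exact Matrix.diagonal_one
  have hDinvD : Dinv * D = 1 := by
    rw [hDdef, hDinvdef, Matrix.diagonal_mul_diagonal]
    rw [show (fun i => Real.exp (-(u i / 2)) * Real.exp (u i / 2)) = fun _ => (1 : ℝ) by
      funext i; rw [← Real.exp_add]; simp]
    exact Matrix.diagonal_one
  -- N t : the matrix diag(exp (update u a t)) * R + 1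
  set N : ℝ → Matrix (Fin m) (Fin m) ℝ :=
    fun t => Matrix.diagonal (fun i => Real.exp (Function.update u a t i)) * R + 1 with hNdef
  set N₀ : Matrix (Fin m) (Fin m) ℝ :=
    Matrix.diagonal (fun i => Real.exp (u i)) * R + 1 with hN0def
  have hNa : N (u a) = N₀ := by rw [hNdef, hN0def]; simp [Function.update_eq_self]
  -- psi in terms of N
  have key : ∀ v : Fin m → ℝ,
      (Lmat R v + 1).det = (Matrix.diagonal (fun i => Real.exp (v i)) * R + 1).det := by
    intro v
    unfold Lmat
    rw [Matrix.det_mul_add_one_comm, ← Matrix.mul_assoc, Matrix.diagonal_mul_diagonal,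
      show (fun i => Real.exp (v i / 2) * Real.exp (v i / 2)) = fun i => Real.exp (v i) by
        funext i; rw [← Real.exp_add, add_halves]]
  have hpsi : ∀ t, psi R (Function.update u a t) = Real.log (N t).det := by
    intro t
    unfold psi
    rw [key]
  -- L = Lmat R u is positive semidefinite, so A := Lmat R u + 1 is posdef
  set A : Matrix (Fin m) (Fin m) ℝ := Lmat R u + 1 with hAdef
  have hDH : (Matrix.conjTranspose D) = D := by
    rw [hDdef, Matrix.diagonal_conjTranspose]
    congr 1
  have hLps : (Lmat R u).PosSemidef := by
    have := hR.posSemidef.mul_mul_conjTranspose_same D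
    rw [hDH] at this
    exact this
  have hApos : A.PosDef := Matrix.PosDef.posSemidef_add hLps Matrix.PosDef.one
  have hdetA : A.det ≠ 0 := ne_of_gt hApos.det_pos
  have hdetN0 : N₀.det = A.det := by rw [hAdef, key u, hN0def]
  have hdetN0ne : N₀.det ≠ 0 := by rw [hdetN0]; exact hdetA
  -- adjugate of N t in column a does not depend on t
  have hadj : ∀ t j, (N t).adjugate j a = N₀.adjugate j a := by
    intro t j
    rw [Matrix.adjugate_apply, Matrix.adjugate_apply]
    congr 1
    ext i k
    rcases eq_or_ne i a with h | h
    · subst h; rw [Matrix.updateRow_self, Matrix.updateRow_self]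
    · rw [Matrix.updateRow_ne h, Matrix.updateRow_ne h, hNdef, hN0def]
      simp only [Matrix.add_apply, Matrix.diagonal_mul, Function.update_of_ne h]
  -- determinant expansion along row a
  have hdet : ∀ t, (N t).det =
      ∑ j, (Real.exp t * R a j + (1 : Matrix (Fin m) (Fin m) ℝ) a j) * N₀.adjugate j a := by
    intro t
    have h1 := congrArg (fun M => M a a) (Matrix.mul_adjugate (N t))
    simp only [Matrix.mul_apply, Matrix.smul_apply, Matrix.one_apply_eq, smul_eq_mul,
      mul_one] at h1
    rw [← h1]
    refine Finset.sum_congr rfl fun j _ => ?_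
    rw [hadj t j]
    congr 1
    rw [hNdef]
    simp only [Matrix.add_apply, Matrix.diagonal_mul, Function.update_self]
  -- derivative of det (N t)
  have hderivdet : HasDerivAt (fun t => (N t).det)
      (∑ j, Real.exp (u a) * R a j * N₀.adjugate j a) (u a) := by
    have : (fun t => (N t).det) = fun t =>
        ∑ j, (Real.exp t * R a j + (1 : Matrix (Fin m) (Fin m) ℝ) a j) * N₀.adjugate j a := by
      funext t; exact hdet t
    rw [this]
    apply HasDerivAt.fun_sum
    intro j _
    have h1 : HasDerivAt (fun t => Real.exp t * R a j + (1 : Matrix (Fin m) (Fin m) ℝ) a j)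
        (Real.exp (u a) * R a j) (u a) :=
      ((Real.hasDerivAt_exp (u a)).mul_const (R a j)).add_const _
    exact h1.mul_const _
  -- derivative of log det (N t)
  have hderivlog : HasDerivAt (fun t => Real.log (N t).det)
      ((N₀.det)⁻¹ * ∑ j, Real.exp (u a) * R a j * N₀.adjugate j a) (u a) := by
    have hne : (N (u a)).det ≠ 0 := by rw [hNa]; exact hdetN0ne
    have := (Real.hasDerivAt_log hne).comp (u a) hderivdet
    rw [hNa] at this
    exact this
  -- identify the derivative value with Kmat R u a a
  have hN0eq : N₀ = D * A * Dinv := by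
    rw [hAdef]
    unfold Lmat
    rw [Matrix.mul_add, Matrix.mul_one, Matrix.add_mul, hDDinv]
    congr 1
    rw [hN0def]
    rw [show D * (D * R * D) * Dinv = (D * D) * R * (D * Dinv) by
      simp only [Matrix.mul_assoc]]
    rw [hDDinv, Matrix.mul_one, hDdef, Matrix.diagonal_mul_diagonal,
      show (fun i => Real.exp (u i / 2) * Real.exp (u i / 2)) = fun i => Real.exp (u i) by
        funext i; rw [← Real.exp_add, add_halves]]
  have hAinv : A * A⁻¹ = 1 := Matrix.mul_nonsing_inv A (Ne.isUnit hdetA)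
  have hN0inv : N₀⁻¹ = D * A⁻¹ * Dinv := by
    apply Matrix.inv_eq_right_inv
    rw [hN0eq]
    rw [show D * A * Dinv * (D * A⁻¹ * Dinv) = D * (A * ((Dinv * D) * A⁻¹)) * Dinv by
      simp only [Matrix.mul_assoc]]
    rw [hDinvD, Matrix.one_mul, hAinv, Matrix.mul_one, hDDinv]
  have hval : (N₀.det)⁻¹ * ∑ j, Real.exp (u a) * R a j * N₀.adjugate j a
      = Kmat R u a a := by
    have hsum : ∑ j, Real.exp (u a) * R a j * N₀.adjugate j a
        = Real.exp (u a) * (R * N₀.adjugate) a a := by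
      rw [Matrix.mul_apply, Finset.mul_sum]
      refine Finset.sum_congr rfl fun j _ => by ring
    rw [hsum]
    have hinv : N₀⁻¹ = (N₀.det)⁻¹ • N₀.adjugate := by
      rw [Matrix.inv_def, Ring.inverse_eq_inv']
    have h2 : (R * N₀⁻¹) a a = (N₀.det)⁻¹ * (R * N₀.adjugate) a a := by
      rw [hinv, Matrix.mul_smul, Matrix.smul_apply, smul_eq_mul]
    have h3 : (N₀.det)⁻¹ * (Real.exp (u a) * (R * N₀.adjugate) a a)
        = Real.exp (u a) * (R * N₀⁻¹) a a := by rw [h2]; ring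
    rw [h3, hN0inv]
    -- (R * (D * A⁻¹ * Dinv)) a a = (R * D * A⁻¹) a a * exp (-(u a / 2))
    have h4 : R * (D * A⁻¹ * Dinv) = (R * D * A⁻¹) * Dinv := by
      simp only [Matrix.mul_assoc]
    rw [h4, hDinvdef, Matrix.mul_diagonal]
    -- Kmat a a
    unfold Kmat
    rw [← hAdef]
    unfold Lmat
    rw [← hDdef,
      show D * R * D * A⁻¹ = D * (R * D * A⁻¹) by simp only [Matrix.mul_assoc],
      hDdef, Matrix.diagonal_mul, ← hDdef]
    have h5 : Real.exp (u a) * Real.exp (-(u a / 2)) = Real.exp (u a / 2) := by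
      rw [← Real.exp_add]; ring_nf
    linear_combination (R * D * A⁻¹) a a * h5
  rw [show (fun t : ℝ => psi R (Function.update u a t)) = fun t => Real.log (N t).det from
    funext hpsi]
  rw [← hval]
  exact hderivlog
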